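/- arXiv:1811.10133 — 2 statements merged into one kernel-verified Lean document; each statement's English description precedes it below -/
import Mathlib

section
/- Let X ∈ ℂ^{n×n} be Hermitian positive semidefinite with eigenvalues λ₁(X) ≥ ⋯ ≥ λₙ(X), let N ≤ n, and let Φ = { P ∈ ℂ^{n×n} : P Hermitian, 0 ⪯ P ⪯ I, trace(P) = n − N }. Then for every P ∈ Φ, trace(P·X) ≥ Σ_{i=N+1}^{n} λᵢ(X), i.e., trace(P·X) ≥ trace(X) − Σ_{i=1}^{N} λᵢ(X). -/
open Matrix ComplexOrder

private theorem stmt9_key {n N : ℕ} (μ c : Fin n → ℝ) (t : ℝ)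
    (hc0 : ∀ i, 0 ≤ c i) (hc1 : ∀ i, c i ≤ 1)
    (hsum : ∑ i, c i = (n - N : ℕ))
    (hlo : ∀ i : Fin n, (i : ℕ) < N → t ≤ μ i)
    (hhi : ∀ i : Fin n, N ≤ (i : ℕ) → μ i ≤ t) :
    ∑ i ∈ Finset.univ.filter (fun i : Fin n => N ≤ (i : ℕ)), μ i ≤ ∑ i, μ i * c i := by
  classical
  set S := Finset.univ.filter (fun i : Fin n => N ≤ (i : ℕ)) with hS
  have hcard : S.card = n - N := by
    rcases lt_or_ge N n with h | h
    · have : S = Finset.Ici (⟨N, h⟩ : Fin n) := by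
        ext i; simp [hS, Fin.le_def]
      rw [this, Fin.card_Ici]
    · have he : S = ∅ := by
        ext i; simp only [hS, Finset.mem_filter, Finset.mem_univ, true_and,
          Finset.notMem_empty, iff_false, not_le]
        exact lt_of_lt_of_le i.isLt (by omega)
      rw [he]; simp; omega
  have h1 : ∑ i ∈ S, (μ i - t) ≤ ∑ i ∈ S, (μ i - t) * c i := by
    refine Finset.sum_le_sum fun i hi => ?_
    have hμ : μ i - t ≤ 0 := sub_nonpos.2 (hhi i (by simpa [hS] using hi))
    nlinarith [hc1 i, hc0 i]
  have h2 : (0:ℝ) ≤ ∑ i ∈ Sᶜ, (μ i - t) * c i := by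
    refine Finset.sum_nonneg fun i hi => ?_
    have : (i : ℕ) < N := by
      simpa [hS, Finset.mem_compl] using hi
    exact mul_nonneg (sub_nonneg.2 (hlo i this)) (hc0 i)
  have hsplit : ∑ i ∈ S, (μ i - t) * c i + ∑ i ∈ Sᶜ, (μ i - t) * c i
      = ∑ i, (μ i - t) * c i := Finset.sum_add_sum_compl S _
  have e1 : ∑ i ∈ S, μ i = ∑ i ∈ S, (μ i - t) + ((n - N : ℕ) : ℝ) * t := by
    rw [Finset.sum_sub_distrib, Finset.sum_const, hcard, nsmul_eq_mul]; ring
  have e2 : ∑ i, μ i * c i = ∑ i, (μ i - t) * c i + ((n - N : ℕ) : ℝ) * t := by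
    have : ∀ i : Fin n, (μ i - t) * c i = μ i * c i - t * c i := fun i => by ring
    simp_rw [this, Finset.sum_sub_distrib, ← Finset.mul_sum, hsum]; ring
  linarith

/-- Ky Fan-type lower bound: for PSD X with decreasingly ordered
eigenvalues μ, N ≤ n, and any Hermitian P with 0 ⪯ P ⪯ I and trace(P) = n − N,
trace(P·X) ≥ Σ_{i=N+1}^{n} μ_i = trace(X) − Σ_{i=1}^{N} μ_i. -/
theorem stmt9 {n N : ℕ} (hN : N ≤ n) (X : Matrix (Fin n) (Fin n) ℂ)
    (hX : X.PosSemidef) (μ : Fin n → ℝ)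
    (hmono : ∀ i j : Fin n, i ≤ j → μ j ≤ μ i)
    (hperm : ∃ e : Equiv.Perm (Fin n), ∀ i, μ i = hX.1.eigenvalues (e i))
    (P : Matrix (Fin n) (Fin n) ℂ) (hPH : P.IsHermitian)
    (hP0 : P.PosSemidef) (hPI : (1 - P).PosSemidef)
    (hPtr : P.trace = ((n - N : ℕ) : ℂ)) :
    (∑ i ∈ Finset.univ.filter (fun i : Fin n => N ≤ (i : ℕ)), μ i ≤ ((P * X).trace).re)
    ∧ X.trace.re - ∑ i : Fin N, μ (Fin.castLE hN i) ≤ ((P * X).trace).re := by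
  classical
  obtain ⟨e, he⟩ := hperm
  set U : Matrix (Fin n) (Fin n) ℂ := (hX.1.eigenvectorUnitary : Matrix (Fin n) (Fin n) ℂ)
    with hUdef
  have hUU : star U * U = 1 := Unitary.coe_star_mul_self _
  have hUU' : U * star U = 1 := Unitary.coe_mul_star_self _
  -- quadratic form of column j of U against a matrix M
  have hq : ∀ (M : Matrix (Fin n) (Fin n) ℂ) (j : Fin n),
      star (fun k => U k j) ⬝ᵥ (M *ᵥ fun k => U k j) = (star U * M * U) j j := by
    intro M j
    simp only [mul_apply, dotProduct, mulVec, dotProduct, Pi.star_apply, star_apply,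
      conjTranspose_apply, Finset.mul_sum, Finset.sum_mul]
    rw [Finset.sum_comm]
    apply Finset.sum_congr rfl; intro k _
    apply Finset.sum_congr rfl; intro l _
    ring
  set d : Fin n → ℝ := fun j => ((star U * P * U) j j).re with hddef
  have hentry : ∀ j, (star U * P * U) j j = (d j : ℂ) := by
    intro j
    have h0 : (0:ℂ) ≤ (star U * P * U) j j := by
      rw [← hq P j]; exact hP0.dotProduct_mulVec_nonneg _
    rw [Complex.nonneg_iff] at h0
    exact Complex.ext (by simp [hddef]) (by simp [hddef, ← h0.2])
  have hd0 : ∀ j, 0 ≤ d j := by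
    intro j
    have h0 : (0:ℂ) ≤ (star U * P * U) j j := by
      rw [← hq P j]; exact hP0.dotProduct_mulVec_nonneg _
    exact (Complex.nonneg_iff.1 h0).1
  have hd1 : ∀ j, d j ≤ 1 := by
    intro j
    have h0 : (0:ℂ) ≤ (star U * (1 - P) * U) j j := by
      rw [← hq (1 - P) j]; exact hPI.dotProduct_mulVec_nonneg _
    have hcompute : (star U * (1 - P) * U) j j = 1 - (d j : ℂ) := by
      rw [mul_sub, mul_one, sub_mul, hUU, Matrix.sub_apply, one_apply_eq, hentry]
    rw [hcompute, Complex.nonneg_iff] at h0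
    have := h0.1
    simp at this
    linarith
  have hdsum : ∑ j, d j = ((n - N : ℕ) : ℝ) := by
    have htr : (star U * P * U).trace = ((n - N : ℕ) : ℂ) := by
      rw [trace_mul_cycle, hUU', one_mul, hPtr]
    have : (∑ j, (d j : ℂ)) = ((n - N : ℕ) : ℂ) := by
      rw [← htr]
      simp only [trace, diag]
      exact (Finset.sum_congr rfl fun j _ => (hentry j).symm)
    exact_mod_cast this
  -- trace of P * X
  have hPX : ((P * X).trace).re = ∑ j, d j * hX.1.eigenvalues j := by
    have hspec : X = U * diagonal (RCLike.ofReal ∘ hX.1.eigenvalues) * star U :=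
      hX.1.spectral_theorem
    have h1 : (P * X).trace = ((star U * P * U) * diagonal (RCLike.ofReal ∘ hX.1.eigenvalues)).trace := by
      conv_lhs => rw [hspec]
      rw [show P * (U * diagonal (RCLike.ofReal ∘ hX.1.eigenvalues) * star U)
          = (P * U * diagonal (RCLike.ofReal ∘ hX.1.eigenvalues)) * star U by
          simp [mul_assoc]]
      rw [trace_mul_cycle]
      congr 1
      simp [mul_assoc]
    rw [h1]
    simp only [trace, diag, mul_diagonal]
    rw [Complex.re_sum]
    refine Finset.sum_congr rfl fun j _ => ?_
    rw [hentry]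
    simp [RCLike.ofReal]
  -- reindex by the permutation
  set c : Fin n → ℝ := fun i => d (e i) with hcdef
  have hre : ((P * X).trace).re = ∑ i, μ i * c i := by
    rw [hPX, ← Equiv.sum_comp e (fun j => d j * hX.1.eigenvalues j)]
    refine Finset.sum_congr rfl fun i _ => ?_
    rw [he i, hcdef]; ring
  have hcsum : ∑ i, c i = ((n - N : ℕ) : ℝ) := by
    rw [hcdef, Equiv.sum_comp e d, hdsum]
  -- the threshold
  set t : ℝ := if h : N < n then μ ⟨N, h⟩ else 0 with htdef
  have hμ0 : ∀ i, 0 ≤ μ i := fun i => by rw [he i]; exact hX.eigenvalues_nonneg _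
  have hlo : ∀ i : Fin n, (i : ℕ) < N → t ≤ μ i := by
    intro i hi
    rcases lt_or_ge N n with h | h
    · rw [htdef, dif_pos h]
      exact hmono i ⟨N, h⟩ (by simpa [Fin.le_def] using hi.le)
    · rw [htdef, dif_neg (by omega)]
      exact hμ0 i
  have hhi : ∀ i : Fin n, N ≤ (i : ℕ) → μ i ≤ t := by
    intro i hi
    have h : N < n := lt_of_le_of_lt hi i.isLt
    rw [htdef, dif_pos h]
    exact hmono ⟨N, h⟩ i (by simpa [Fin.le_def] using hi)
  have main : ∑ i ∈ Finset.univ.filter (fun i : Fin n => N ≤ (i : ℕ)), μ i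
      ≤ ((P * X).trace).re := by
    rw [hre]
    exact stmt9_key μ c t (fun i => hd0 _) (fun i => hd1 _) hcsum hlo hhi
  refine ⟨main, ?_⟩
  -- trace of X is the sum of all μ
  have hXtr : X.trace.re = ∑ i, μ i := by
    have hspec : X = U * diagonal (RCLike.ofReal ∘ hX.1.eigenvalues) * star U :=
      hX.1.spectral_theorem
    have h1 : X.trace = (diagonal (RCLike.ofReal ∘ hX.1.eigenvalues)).trace := by
      conv_lhs => rw [hspec]
      rw [trace_mul_cycle, hUU, one_mul]
    rw [h1]
    simp only [trace, diag, diagonal_apply_eq, Function.comp]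
    have hμe : ∑ i, μ i = ∑ i, hX.1.eigenvalues i := by
      rw [← Equiv.sum_comp e hX.1.eigenvalues]
      exact Finset.sum_congr rfl fun i _ => he i
    rw [Complex.re_sum, hμe]
    refine Finset.sum_congr rfl fun i _ => ?_
    simp [RCLike.ofReal]
  have hsum_split : ∑ i ∈ Finset.univ.filter (fun i : Fin n => N ≤ (i : ℕ)), μ i
      + ∑ i ∈ Finset.univ.filter (fun i : Fin n => ¬ N ≤ (i : ℕ)), μ i = ∑ i, μ i :=
    Finset.sum_filter_add_sum_filter_not _ _ _
  have hcast : ∑ i ∈ Finset.univ.filter (fun i : Fin n => ¬ N ≤ (i : ℕ)), μ i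
      = ∑ i : Fin N, μ (Fin.castLE hN i) := by
    refine Finset.sum_bij'
      (fun (a : Fin n) (ha : a ∈ Finset.univ.filter (fun i : Fin n => ¬ N ≤ (i : ℕ))) =>
        (⟨(a : ℕ), by have := ha; simp at this; omega⟩ : Fin N))
      (fun (b : Fin N) _ => Fin.castLE hN b)
      (fun a ha => Finset.mem_univ _)
      (fun b hb => by simp [Fin.castLE])
      (fun a ha => by simp [Fin.ext_iff, Fin.castLE])
      (fun b hb => by simp [Fin.ext_iff, Fin.castLE])
      (fun a ha => by apply congrArg; exact Fin.ext rfl)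
  linarith [main]
end

section
/- Let X ∈ ℂ^{n×n} be Hermitian positive semidefinite and let N ≤ n. Then trace(X) − Σ_{i=1}^{N} λᵢ(X) = min { trace(P·X) : P Hermitian, 0 ⪯ P ⪯ I, trace(P) = n − N }, and the minimum is attained. -/
open Matrix ComplexOrder

lemma kyfan_diag_re_nonneg {n : ℕ} {Q : Matrix (Fin n) (Fin n) ℂ}
    (hQ : Q.PosSemidef) (i : Fin n) : 0 ≤ (Q i i).re := by
  have h := hQ.dotProduct_mulVec_nonneg (Pi.single i 1)
  have he : star (Pi.single i 1 : Fin n → ℂ) ⬝ᵥ (Q *ᵥ Pi.single i 1) = Q i i := by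
    simp [dotProduct, mulVec, Pi.single_apply]
  rw [he] at h
  exact (Complex.le_def.mp h).1

lemma kyfan_lp {n N : ℕ} (hN : N ≤ n) (μ r : Fin n → ℝ)
    (hμ0 : ∀ i, 0 ≤ μ i) (hmono : ∀ i j : Fin n, i ≤ j → μ j ≤ μ i)
    (hr0 : ∀ i, 0 ≤ r i) (hr1 : ∀ i, r i ≤ 1)
    (hsum : ∑ i, r i = ((n - N : ℕ) : ℝ))
    (hcard : (Finset.univ.filter (fun i : Fin n => N ≤ (i : ℕ))).card = n - N) :
    ∑ i ∈ Finset.univ.filter (fun i : Fin n => N ≤ (i : ℕ)), μ i ≤ ∑ i, r i * μ i := by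
  rcases lt_or_eq_of_le hN with h | h
  · set t := μ ⟨N, h⟩ with ht
    have key : ∀ i : Fin n,
        (if N ≤ (i : ℕ) then μ i else 0) + (r i - if N ≤ (i:ℕ) then 1 else 0) * t
        ≤ r i * μ i := by
      intro i
      by_cases hi : N ≤ (i : ℕ)
      · simp only [hi, if_pos]
        have hμi : μ i ≤ t := hmono ⟨N, h⟩ i (by exact hi)
        nlinarith [hr1 i]
      · simp only [hi, if_neg, not_false_iff]
        have hμi : t ≤ μ i := hmono i ⟨N, h⟩ (le_of_lt (by exact (lt_of_not_ge hi : (i : ℕ) < N)))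
        nlinarith [hr0 i]
    have hind : ∑ i : Fin n, (if N ≤ (i:ℕ) then (1:ℝ) else 0) = ((n - N : ℕ) : ℝ) := by
      rw [Finset.sum_boole, hcard]
    calc ∑ i ∈ Finset.univ.filter (fun i : Fin n => N ≤ (i : ℕ)), μ i
        = ∑ i : Fin n, ((if N ≤ (i : ℕ) then μ i else 0)
            + (r i - if N ≤ (i:ℕ) then 1 else 0) * t) := by
          rw [Finset.sum_add_distrib, ← Finset.sum_filter]
          have : ∑ i : Fin n, (r i - if N ≤ (i:ℕ) then 1 else 0) * t
              = (∑ i, r i - ∑ i : Fin n, (if N ≤ (i:ℕ) then (1:ℝ) else 0)) * t := by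
            rw [← Finset.sum_mul, Finset.sum_sub_distrib]
          rw [this, hind, hsum, sub_self, zero_mul, add_zero]
      _ ≤ ∑ i, r i * μ i := Finset.sum_le_sum fun i _ => key i
  · have hempty : Finset.univ.filter (fun i : Fin n => N ≤ (i : ℕ)) = ∅ := by
      subst h
      ext i; simp [Nat.not_le.mpr i.2]
    rw [hempty, Finset.sum_empty]
    exact Finset.sum_nonneg fun i _ => mul_nonneg (hr0 i) (hμ0 i)

/-- Ky Fan identity: for PSD X with decreasingly ordered
eigenvalues μ and N ≤ n,
trace(X) − Σ_{i=1}^{N} μ_i = min { trace(P·X) : P Hermitian, 0 ⪯ P ⪯ I,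
trace(P) = n − N }, and the minimum is attained. -/
theorem stmt11 {n N : ℕ} (hN : N ≤ n) (X : Matrix (Fin n) (Fin n) ℂ)
    (hX : X.PosSemidef) (μ : Fin n → ℝ)
    (hmono : ∀ i j : Fin n, i ≤ j → μ j ≤ μ i)
    (hperm : ∃ e : Equiv.Perm (Fin n), ∀ i, μ i = hX.1.eigenvalues (e i)) :
    IsLeast { t : ℝ | ∃ P : Matrix (Fin n) (Fin n) ℂ,
        P.IsHermitian ∧ P.PosSemidef ∧ (1 - P).PosSemidef
        ∧ P.trace = ((n - N : ℕ) : ℂ) ∧ t = ((P * X).trace).re }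
      (X.trace.re - ∑ i : Fin N, μ (Fin.castLE hN i)) := by
  obtain ⟨e, he⟩ := hperm
  set U : Matrix (Fin n) (Fin n) ℂ := (hX.1.eigenvectorUnitary : Matrix (Fin n) (Fin n) ℂ) with hUdef
  set lam : Fin n → ℝ := hX.1.eigenvalues with hlam
  have hU1 : U * Uᴴ = 1 := by
    rw [← Matrix.star_eq_conjTranspose]
    exact Matrix.mem_unitaryGroup_iff.mp hX.1.eigenvectorUnitary.2
  have hU2 : Uᴴ * U = 1 := by
    rw [← Matrix.star_eq_conjTranspose]
    exact Matrix.mem_unitaryGroup_iff'.mp hX.1.eigenvectorUnitary.2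
  have hspec : X = U * diagonal (fun i => (lam i : ℂ)) * Uᴴ := by
    have := hX.1.spectral_theorem
    rw [Unitary.conjStarAlgAut_apply] at this
    rw [← Matrix.star_eq_conjTranspose]
    exact this
  -- eigenvalues are nonneg, and μ is nonneg
  have hlam0 : ∀ i, 0 ≤ lam i := hX.eigenvalues_nonneg
  have hμ0 : ∀ i, 0 ≤ μ i := fun i => (he i) ▸ hlam0 (e i)
  have hlamμ : ∀ i, lam i = μ (e.symm i) := by
    intro i
    rw [he (e.symm i), Equiv.apply_symm_apply]
  -- general trace formula
  have htrace : ∀ P : Matrix (Fin n) (Fin n) ℂ,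
      (P * X).trace = ∑ i, (Uᴴ * P * U) i i * (lam i : ℂ) := by
    intro P
    conv_lhs => rw [hspec]
    rw [show P * (U * diagonal (fun i => (lam i : ℂ)) * Uᴴ)
        = (P * U * diagonal (fun i => (lam i : ℂ))) * Uᴴ by
          simp only [Matrix.mul_assoc],
      Matrix.trace_mul_comm, ← Matrix.mul_assoc, ← Matrix.mul_assoc]
    simp [Matrix.trace, Matrix.diag, Matrix.mul_diagonal]
  -- cardinality of upper filter
  have hmap : (Finset.univ.map (Fin.castLEEmb hN))
      = Finset.univ.filter (fun i : Fin n => (i : ℕ) < N) := by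
    ext j
    simp only [Finset.mem_map, Finset.mem_univ, true_and, Finset.mem_filter, Fin.castLEEmb,
      Function.Embedding.coeFn_mk]
    constructor
    · rintro ⟨a, rfl⟩; exact a.2
    · rintro hj; exact ⟨⟨(j : ℕ), hj⟩, rfl⟩
  have hcardlt : (Finset.univ.filter (fun i : Fin n => (i : ℕ) < N)).card = N := by
    rw [← hmap, Finset.card_map, Finset.card_univ, Fintype.card_fin]
  have hfilterne : (Finset.univ.filter (fun i : Fin n => ¬ (i : ℕ) < N))
      = Finset.univ.filter (fun i : Fin n => N ≤ (i : ℕ)) := by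
    apply Finset.filter_congr; intro i _; simp [not_lt]
  have hcard : (Finset.univ.filter (fun i : Fin n => N ≤ (i : ℕ))).card = n - N := by
    have := Finset.card_filter_add_card_filter_not
      (s := (Finset.univ : Finset (Fin n))) (p := fun i : Fin n => (i : ℕ) < N)
    rw [hcardlt, hfilterne, Finset.card_univ, Fintype.card_fin] at this
    omega
  -- sum of μ over all = trace.re
  have htrX : X.trace.re = ∑ i, μ i := by
    have h1 : (1 * X).trace = ∑ i, ((1 : Matrix (Fin n) (Fin n) ℂ)) i i * (lam i : ℂ) := by
      have := htrace 1
      rwa [Matrix.mul_one, hU2] at this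
    rw [Matrix.one_mul] at h1
    have : X.trace = ∑ i, (μ i : ℂ) := by
      rw [h1]
      rw [← Equiv.sum_comp e (fun i => ((1 : Matrix (Fin n) (Fin n) ℂ)) i i * (lam i : ℂ))]
      apply Finset.sum_congr rfl
      intro j _
      simp [Matrix.one_apply, ← he]
    rw [this]
    simp
  -- the target equals sum over upper filter
  have hsplit : X.trace.re - ∑ i : Fin N, μ (Fin.castLE hN i)
      = ∑ i ∈ Finset.univ.filter (fun i : Fin n => N ≤ (i : ℕ)), μ i := by
    have h1 : ∑ i : Fin N, μ (Fin.castLE hN i)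
        = ∑ i ∈ Finset.univ.filter (fun i : Fin n => (i : ℕ) < N), μ i := by
      rw [← hmap, Finset.sum_map]
      rfl
    have h2 := Finset.sum_filter_add_sum_filter_not (Finset.univ : Finset (Fin n))
      (fun i : Fin n => (i : ℕ) < N) μ
    rw [hfilterne] at h2
    rw [htrX, h1, ← h2]
    ring
  rw [hsplit]
  constructor
  · -- membership: the minimizer
    set d : Fin n → ℂ := fun i => if N ≤ ((e.symm i : Fin n) : ℕ) then (1:ℂ) else 0 with hd
    have hd0 : ∀ i, 0 ≤ d i := by
      intro i; rw [hd]; dsimp only; split <;> norm_num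
    have hd1 : ∀ i, 0 ≤ 1 - d i := by
      intro i; rw [hd]; dsimp only; split <;> norm_num
    refine ⟨U * diagonal d * Uᴴ, ?_, ?_, ?_, ?_, ?_⟩
    · exact ((Matrix.posSemidef_diagonal_iff.mpr hd0).mul_mul_conjTranspose_same U).1
    · exact (Matrix.posSemidef_diagonal_iff.mpr hd0).mul_mul_conjTranspose_same U
    · have heq : 1 - U * diagonal d * Uᴴ = U * diagonal (fun i => 1 - d i) * Uᴴ := by
        have : (diagonal (fun i => 1 - d i) : Matrix (Fin n) (Fin n) ℂ)
            = 1 - diagonal d := by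
          rw [← Matrix.diagonal_one, ← Matrix.diagonal_sub]
        rw [this, Matrix.mul_sub, Matrix.mul_one, Matrix.sub_mul, hU1]
      rw [heq]
      exact (Matrix.posSemidef_diagonal_iff.mpr hd1).mul_mul_conjTranspose_same U
    · rw [Matrix.trace_mul_cycle, hU2, Matrix.one_mul, Matrix.trace_diagonal]
      rw [show ∑ i, d i = ∑ i : Fin n, (if N ≤ ((e.symm i : Fin n) : ℕ) then (1:ℂ) else 0) from rfl]
      rw [← Equiv.sum_comp e (fun i => if N ≤ ((e.symm i : Fin n) : ℕ) then (1:ℂ) else 0)]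
      simp only [Equiv.symm_apply_apply]
      rw [Finset.sum_boole, hcard]
    · rw [htrace]
      have hQ : Uᴴ * (U * diagonal d * Uᴴ) * U = diagonal d := by
        rw [show Uᴴ * (U * diagonal d * Uᴴ) * U = (Uᴴ * U) * diagonal d * (Uᴴ * U) by
            simp only [Matrix.mul_assoc],
          hU2, Matrix.one_mul, Matrix.mul_one]
      rw [hQ]
      have : ∑ i, (diagonal d) i i * (lam i : ℂ)
          = ∑ i ∈ Finset.univ.filter (fun i : Fin n => N ≤ (i : ℕ)), (μ i : ℂ) := by
        simp only [Matrix.diagonal_apply_eq, hd]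
        rw [← Equiv.sum_comp e
          (fun i => (if N ≤ ((e.symm i : Fin n) : ℕ) then (1:ℂ) else 0) * (lam i : ℂ))]
        simp only [Equiv.symm_apply_apply]
        rw [Finset.sum_filter]
        apply Finset.sum_congr rfl
        intro j _
        rw [hlamμ (e j), Equiv.symm_apply_apply]
        split <;> simp
      rw [this]
      rw [← Complex.ofReal_sum]
      simp
  · -- lower bound
    rintro t ⟨P, hPh, hP, hIP, htr, rfl⟩
    set Q : Matrix (Fin n) (Fin n) ℂ := Uᴴ * P * U with hQdef
    have hQpsd : Q.PosSemidef := hP.conjTranspose_mul_mul_same U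
    have hIQ : (1 - Q).PosSemidef := by
      have heq : (1 : Matrix (Fin n) (Fin n) ℂ) - Q = Uᴴ * (1 - P) * U := by
        rw [hQdef, Matrix.mul_sub, Matrix.sub_mul, Matrix.mul_one, hU2]
      rw [heq]
      exact hIP.conjTranspose_mul_mul_same U
    set r : Fin n → ℝ := fun j => (Q (e j) (e j)).re with hr
    have hr0 : ∀ j, 0 ≤ r j := fun j => kyfan_diag_re_nonneg hQpsd (e j)
    have hr1 : ∀ j, r j ≤ 1 := by
      intro j
      have := kyfan_diag_re_nonneg hIQ (e j)
      simp only [Matrix.sub_apply, Matrix.one_apply_eq, Complex.sub_re, Complex.one_re] at this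
      linarith
    have htrQ : Q.trace = P.trace := by
      rw [hQdef, Matrix.trace_mul_cycle, hU1, Matrix.one_mul]
    have hsum : ∑ j, r j = ((n - N : ℕ) : ℝ) := by
      have h1 : ∑ j, r j = ∑ i, (Q i i).re := by
        rw [hr]
        exact Equiv.sum_comp e (fun i => (Q i i).re)
      have h2 : ∑ i, (Q i i).re = Q.trace.re := by
        rw [Matrix.trace]
        simp [Matrix.diag, Complex.re_sum]
      rw [h1, h2, htrQ, htr]
      simp
    have hval : ((P * X).trace).re = ∑ j, r j * μ j := by
      rw [htrace]
      have h1 : (∑ i, (Uᴴ * P * U) i i * (lam i : ℂ)).re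
          = ∑ i, (Q i i).re * μ (e.symm i) := by
        rw [Complex.re_sum]
        apply Finset.sum_congr rfl
        intro i _
        rw [hlamμ i]
        simp [← hQdef, Complex.mul_re]
      rw [h1]
      rw [← Equiv.sum_comp e (fun i => (Q i i).re * μ (e.symm i))]
      simp [hr]
    rw [hval]
    exact kyfan_lp hN μ r hμ0 hmono hr0 hr1 hsum hcard
end
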